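/- Fix real numbers μ_1,...,μ_n (leave-one-out predictions at the test point), nonnegative reals R_1,...,R_n (leave-one-out residuals), a real y (the true test response), and α ∈ (0,1). Define q⁺ = the ⌈(1-α)(n+1)⌉-th smallest of {μ_i + R_i} (or +∞ if ⌈(1-α)(n+1)⌉ > n) and q⁻ = the ⌊α(n+1)⌋-th smallest of {μ_i - R_i} (or -∞ if ⌊α(n+1)⌋ < 1). If y ∉ [q⁻, q⁺], then the number of indices i ∈ {1,...,n} with |y - μ_i| > R_i is at least (1-α)(n+1). -/

import Mathlib

/-- The `k`-th smallest of `v 0, ..., v (n-1)` (1-indexed). -/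
noncomputable def kth {n : ℕ} (v : Fin n → ℝ) (k : ℕ) : ℝ :=
  (((List.ofFn v) : Multiset ℝ).sort (· ≤ ·)).getD (k - 1) 0

/-- The upper quantile `q⁺_{n,α}{v_i}`: the `⌈(1-α)(n+1)⌉`-th smallest of
`v_1,…,v_n`, or `+∞` if `⌈(1-α)(n+1)⌉ > n`. -/
noncomputable def qplusE {n : ℕ} (α : ℝ) (v : Fin n → ℝ) : EReal :=
  if ⌈(1 - α) * (n + 1)⌉₊ ≤ n then ((kth v ⌈(1 - α) * (n + 1)⌉₊ : ℝ) : EReal) else ⊤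

/-- The lower quantile `q⁻_{n,α}{v_i}`: the `⌊α(n+1)⌋`-th smallest of
`v_1,…,v_n`, or `-∞` if `⌊α(n+1)⌋ < 1`. -/
noncomputable def qminusE {n : ℕ} (α : ℝ) (v : Fin n → ℝ) : EReal :=
  if 1 ≤ ⌊α * (n + 1)⌋₊ then ((kth v ⌊α * (n + 1)⌋₊ : ℝ) : EReal) else ⊥


theorem card_filter_eq_countP (n : ℕ) (v : Fin n → ℝ) (p : ℝ → Prop) [DecidablePred p] :
    (Finset.univ.filter fun i => p (v i)).card = (List.ofFn v).countP (fun x => decide (p x)) := by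
  rw [List.ofFn_eq_map, List.countP_map, List.countP_eq_length_filter, Fin.univ_def]
  simp [Finset.filter, Finset.card, Multiset.filter_coe, Function.comp_def]

theorem countP_sort (l : List ℝ) (p : ℝ → Bool) :
    ((l : Multiset ℝ).sort (· ≤ ·)).countP p = l.countP p :=
  (Multiset.coe_eq_coe.mp (Multiset.sort_eq _ _)).countP_eq p

theorem count_lt_of_sorted (L : List ℝ) (hL : L.Pairwise (· ≤ ·)) (i : ℕ) (hi : i < L.length)
    (y : ℝ) (h : L.getD i 0 < y) : i + 1 ≤ L.countP (fun x => decide (x < y)) := by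
  have hget : L[i] < y := by rwa [List.getD_eq_getElem _ _ hi] at h
  have hall : ∀ j (hj : j < L.length), j ≤ i → L[j] < y := by
    intro j hj hji
    rcases lt_or_eq_of_le hji with hlt | rfl
    · exact lt_of_le_of_lt ((List.pairwise_iff_getElem.mp hL) j i hj hi hlt) hget
    · exact hget
  have h1 : (L.take (i+1)).countP (fun x => decide (x < y)) = i + 1 := by
    rw [List.countP_eq_length.mpr, List.length_take]
    · omega
    · intro a ha
      obtain ⟨j, hj, rfl⟩ := List.mem_iff_getElem.mp ha
      rw [List.getElem_take]
      simp only [decide_eq_true_eq]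
      exact hall j (by simp at hj; omega) (by simp at hj; omega)
  calc i + 1 = (L.take (i+1)).countP (fun x => decide (x < y)) := h1.symm
    _ ≤ (L.take (i+1)).countP _ + (L.drop (i+1)).countP (fun x => decide (x < y)) := Nat.le_add_right _ _
    _ = L.countP (fun x => decide (x < y)) := by rw [← List.countP_append, List.take_append_drop]

theorem count_gt_of_sorted (L : List ℝ) (hL : L.Pairwise (· ≤ ·)) (i : ℕ) (hi : i < L.length)
    (y : ℝ) (h : y < L.getD i 0) : L.length - i ≤ L.countP (fun x => decide (y < x)) := by
  have hget : y < L[i] := by rwa [List.getD_eq_getElem _ _ hi] at h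
  have hall : ∀ j (hj : j < L.length), i ≤ j → y < L[j] := by
    intro j hj hji
    rcases lt_or_eq_of_le hji with hlt | rfl
    · exact lt_of_lt_of_le hget ((List.pairwise_iff_getElem.mp hL) i j hi hj hlt)
    · exact hget
  have h1 : (L.drop i).countP (fun x => decide (y < x)) = L.length - i := by
    rw [List.countP_eq_length.mpr, List.length_drop]
    intro a ha
    obtain ⟨j, hj, rfl⟩ := List.mem_iff_getElem.mp ha
    rw [List.getElem_drop]
    simp only [decide_eq_true_eq]
    exact hall (i + j) (by simp at hj; omega) (by omega)
  calc L.length - i = (L.drop i).countP (fun x => decide (y < x)) := h1.symm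
    _ ≤ (L.take i).countP (fun x => decide (y < x)) + (L.drop i).countP _ := Nat.le_add_left _ _
    _ = L.countP (fun x => decide (y < x)) := by rw [← List.countP_append, List.take_append_drop]

theorem kth_count_lt (n : ℕ) (v : Fin n → ℝ) (k : ℕ) (hk1 : 1 ≤ k) (hkn : k ≤ n)
    (y : ℝ) (h : kth v k < y) :
    k ≤ (Finset.univ.filter fun i => v i < y).card := by
  set L := (((List.ofFn v) : Multiset ℝ).sort (· ≤ ·)) with hLdef
  have hlen : L.length = n := by
    simp [hLdef, Multiset.length_sort]
  have hsorted : L.Pairwise (· ≤ ·) := Multiset.pairwise_sort _ _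
  have hcnt := count_lt_of_sorted L hsorted (k - 1) (by omega) y h
  rw [card_filter_eq_countP n v (fun x => x < y), ← countP_sort, ← hLdef]
  omega

theorem kth_count_gt (n : ℕ) (v : Fin n → ℝ) (k : ℕ) (hk1 : 1 ≤ k) (hkn : k ≤ n)
    (y : ℝ) (h : y < kth v k) :
    n - k + 1 ≤ (Finset.univ.filter fun i => y < v i).card := by
  set L := (((List.ofFn v) : Multiset ℝ).sort (· ≤ ·)) with hLdef
  have hlen : L.length = n := by
    simp [hLdef, Multiset.length_sort]
  have hsorted : L.Pairwise (· ≤ ·) := Multiset.pairwise_sort _ _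
  have hcnt := count_gt_of_sorted L hsorted (k - 1) (by omega) y h
  rw [card_filter_eq_countP n v (fun x => y < x), ← countP_sort, ← hLdef]
  omega


/-- noncoverage of the jackknife+ interval implies the test
point wins at least `(1-α)(n+1)` residual comparisons. -/
theorem jackknife_plus_noncoverage_implies_strange (n : ℕ) (α : ℝ)
    (hα0 : 0 < α) (hα1 : α < 1)
    (μ : Fin n → ℝ) (R : Fin n → ℝ) (hR : ∀ i, 0 ≤ R i) (y : ℝ)
    (hnc : ¬ (qminusE α (fun i => μ i - R i) ≤ (y : EReal) ∧
              (y : EReal) ≤ qplusE α (fun i => μ i + R i))) :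
    (1 - α) * (n + 1) ≤
      ((Finset.univ.filter fun i => R i < |y - μ i|).card : ℝ) := by
  rw [not_and_or] at hnc
  rcases hnc with hnc | hnc
  · -- lower: y < q⁻
    rw [qminusE] at hnc
    set m := ⌊α * (n + 1)⌋₊ with hm
    by_cases hm1 : 1 ≤ m
    swap
    · rw [if_neg hm1] at hnc; exact absurd bot_le hnc
    rw [if_pos hm1, not_le] at hnc
    have hy : y < kth (fun i => μ i - R i) m := by exact_mod_cast hnc
    have hfloor : (m : ℝ) ≤ α * (n + 1) := Nat.floor_le (by positivity)
    have hmn : m ≤ n := by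
      by_contra hc
      push_neg at hc
      have : (n : ℝ) + 1 ≤ (m : ℝ) := by exact_mod_cast hc
      nlinarith
    have hcnt := kth_count_gt n (fun i => μ i - R i) m hm1 hmn y hy
    have hsub : (Finset.univ.filter fun i => y < μ i - R i) ⊆
        (Finset.univ.filter fun i => R i < |y - μ i|) := by
      apply Finset.monotone_filter_right
      intro i _ hi
      have : R i < μ i - y := by linarith
      calc R i < μ i - y := this
        _ ≤ |y - μ i| := by rw [abs_sub_comm]; exact le_abs_self _
    have hcard := Finset.card_le_card hsub
    have h1 : ((n - m + 1 : ℕ) : ℝ) ≤ ((Finset.univ.filter fun i => R i < |y - μ i|).card : ℝ) := by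
      exact_mod_cast le_trans hcnt hcard
    have h2 : (1 - α) * (n + 1) ≤ ((n - m + 1 : ℕ) : ℝ) := by
      have : ((n - m + 1 : ℕ) : ℝ) = (n : ℝ) - (m : ℝ) + 1 := by
        push_cast [Nat.cast_sub hmn]; ring
      rw [this]
      nlinarith
    linarith
  · -- upper: q⁺ < y
    rw [qplusE] at hnc
    set k := ⌈(1 - α) * (n + 1)⌉₊ with hk
    by_cases hkn : k ≤ n
    swap
    · rw [if_neg hkn] at hnc; exact absurd le_top hnc
    rw [if_pos hkn, not_le] at hnc
    have hy : kth (fun i => μ i + R i) k < y := by exact_mod_cast hnc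
    have hpos : (0 : ℝ) < (1 - α) * (n + 1) := by nlinarith
    have hk1 : 1 ≤ k := by
      rw [hk]
      exact Nat.ceil_pos.mpr hpos
    have hcnt := kth_count_lt n (fun i => μ i + R i) k hk1 hkn y hy
    have hsub : (Finset.univ.filter fun i => μ i + R i < y) ⊆
        (Finset.univ.filter fun i => R i < |y - μ i|) := by
      apply Finset.monotone_filter_right
      intro i _ hi
      have : R i < y - μ i := by linarith
      exact lt_of_lt_of_le this (le_abs_self _)
    have hcard := Finset.card_le_card hsub
    have h1 : ((k : ℕ) : ℝ) ≤ ((Finset.univ.filter fun i => R i < |y - μ i|).card : ℝ) := by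
      exact_mod_cast le_trans hcnt hcard
    have h2 : (1 - α) * (n + 1) ≤ (k : ℝ) := Nat.le_ceil _
    linarith
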